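/- The contortion tensor decomposes into its spatial part and the kinematic quantities of the preferred frame as K_{abc} = ⊥K_{abc} + 2 v̇_{[a} v_{b]} v_c + 2 v_{[a} σ_{b]c} + (2/3) θ v_{[a} h_{b]c} − κ_{ab} v_c + 2 v_{[a} Ω_{b]c}, where ⊥K_{abc} := h_a^d h_b^e h_c^f K_{def}, v̇_a := K_{abc} v^b v^c, Ω_{ab} := −K_{c[ab]} v^c − v_{[a} K_{b]cd} v^c v^d, θ_{ab} := −K_{c(ab)} v^c + v_{(a} K_{b)cd} v^c v^d, θ := η^{ab} θ_{ab}, σ_{ab} := θ_{ab} − (1/3)θ h_{ab}, and κ_{ab} := K_{abc} v^c − 2 v_{[a} K_{b]cd} v^c v^d. -/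
import Mathlib


open Finset

noncomputable section

/- Index set {0,1,2,3}. -/
abbrev Idx := Fin 4

/-- The Minkowski metric η_{ab} = diag(−1,1,1,1) (which equals its inverse η^{ab}). -/
def ηm (a b : Idx) : ℝ := if a = b then (if a = (0 : Idx) then -1 else 1) else 0

/-- Lowered components of a vector: v_a = η_{ab} v^b. -/
def lo (v : Idx → ℝ) (a : Idx) : ℝ := ∑ b, ηm a b * v b

/-- Mixed projection tensor h_a^b = δ_a^b + v_a v^b. -/
def hmix (v : Idx → ℝ) (a b : Idx) : ℝ := (if a = b then 1 else 0) + lo v a * v b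

/-- Fully lowered projection tensor h_{ab} = η_{ab} + v_a v_b. -/
def hlo (v : Idx → ℝ) (a b : Idx) : ℝ := ηm a b + lo v a * lo v b

/- Rank-3 tensors (all indices lowered). -/
abbrev T3 := Idx → Idx → Idx → ℝ

/-- The covariant derivative of the preferred vector field: ∇_a v_b := K_{bca} v^c. -/
def nab (K : T3) (v : Idx → ℝ) (a b : Idx) : ℝ := ∑ c, K b c a * v c

/-- The acceleration v̇_a = K_{abc} v^b v^c. -/
def vdot (K : T3) (v : Idx → ℝ) (a : Idx) : ℝ := ∑ b, ∑ c, K a b c * v b * v c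

/-- The vorticity Ω_{ab} = −K_{c[ab]} v^c − v_{[a} K_{b]cd} v^c v^d. -/
def vort (K : T3) (v : Idx → ℝ) (a b : Idx) : ℝ :=
  -(∑ c, ((K c a b - K c b a) / 2) * v c)
    - (lo v a * vdot K v b - lo v b * vdot K v a) / 2

/-- The deformation tensor θ_{ab} = −K_{c(ab)} v^c + v_{(a} K_{b)cd} v^c v^d. -/
def deform (K : T3) (v : Idx → ℝ) (a b : Idx) : ℝ :=
  -(∑ c, ((K c a b + K c b a) / 2) * v c)
    + (lo v a * vdot K v b + lo v b * vdot K v a) / 2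

/-- The expansion θ = η^{ab} θ_{ab}. -/
def expans (K : T3) (v : Idx → ℝ) : ℝ := ∑ a, ∑ b, ηm a b * deform K v a b

/-- The trace-free shear σ_{ab} = θ_{ab} − (1/3) θ h_{ab}. -/
def shear (K : T3) (v : Idx → ℝ) (a b : Idx) : ℝ :=
  deform K v a b - (1 / 3) * expans K v * hlo v a b

/-- The spin rotation κ_{ab} = K_{abc} v^c − 2 v_{[a} K_{b]cd} v^c v^d. -/
def spinrot (K : T3) (v : Idx → ℝ) (a b : Idx) : ℝ :=
  (∑ c, K a b c * v c) - (lo v a * vdot K v b - lo v b * vdot K v a)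

/-- The spatial part of the contortion tensor ⊥K_{abc} = h_a^d h_b^e h_c^f K_{def}. -/
def perpK (K : T3) (v : Idx → ℝ) (a b c : Idx) : ℝ :=
  ∑ d, ∑ e, ∑ f, hmix v a d * hmix v b e * hmix v c f * K d e f

set_option maxHeartbeats 4000000 in
/-- The contortion tensor decomposes into its spatial part and the
kinematic quantities of the preferred frame:
`K_{abc} = ⊥K_{abc} + 2 v̇_{[a} v_{b]} v_c + 2 v_{[a} σ_{b]c} + (2/3) θ v_{[a} h_{b]c}
  − κ_{ab} v_c + 2 v_{[a} Ω_{b]c}`. -/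
theorem statement12 (v : Idx → ℝ) (hv : (∑ a, lo v a * v a) = -1)
    (K : T3) (hK : ∀ a b c, K a b c = -K b a c) :
    ∀ a b c : Idx,
      K a b c
        = perpK K v a b c
          + (vdot K v a * lo v b - vdot K v b * lo v a) * lo v c
          + (lo v a * shear K v b c - lo v b * shear K v a c)
          + (expans K v / 3) * (lo v a * hlo v b c - lo v b * hlo v a c)
          - spinrot K v a b * lo v c
          + (lo v a * vort K v b c - lo v b * vort K v a c) := by
  have hd : ∀ i c, K i i c = 0 := fun i c => by have := hK i i c; linarith
  have h10 : ∀ c, K 1 0 c = -K 0 1 c := fun c => hK 1 0 c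
  have h20 : ∀ c, K 2 0 c = -K 0 2 c := fun c => hK 2 0 c
  have h21 : ∀ c, K 2 1 c = -K 1 2 c := fun c => hK 2 1 c
  have h30 : ∀ c, K 3 0 c = -K 0 3 c := fun c => hK 3 0 c
  have h31 : ∀ c, K 3 1 c = -K 1 3 c := fun c => hK 3 1 c
  have h32 : ∀ c, K 3 2 c = -K 2 3 c := fun c => hK 3 2 c
  intro a b c
  fin_cases a <;> fin_cases b <;> fin_cases c <;>
    (simp only [perpK, spinrot, vort, shear, deform, expans, hlo, vdot, hmix, lo, ηm,
      Fin.isValue, Fin.sum_univ_four, reduceIte, Fin.reduceFinMk, Fin.reduceEq,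
      hd, h10, h20, h21, h30, h31, h32,
      mul_zero, zero_mul, mul_one, one_mul, add_zero, zero_add, neg_zero, mul_neg,
      neg_mul, neg_neg, sub_zero, zero_sub] <;>
     try ring)
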